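/- Majorization is stable under tensoring with a common factor: if p ≺ q for probability vectors p, q on a set of size d, then p⊗r ≺ q⊗r for any probability vector r. -/

import Mathlib

/-- Majorization is stable under tensoring with a common factor:
if `p ≺ q` then `p ⊗ r ≺ q ⊗ r`. -/
theorem majorization_tensor_stable {ι κ : Type*} [Fintype ι] [Fintype κ]
    (p q : ι → ℝ) (r : κ → ℝ)
    (hp0 : ∀ i, 0 ≤ p i) (hp1 : ∑ i, p i = 1)
    (hq0 : ∀ i, 0 ≤ q i) (hq1 : ∑ i, q i = 1)
    (hr0 : ∀ j, 0 ≤ r j) (hr1 : ∑ j, r j = 1)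
    (hmaj : ∀ A : Finset ι, ∃ B : Finset ι,
      B.card = A.card ∧ ∑ i ∈ A, p i ≤ ∑ i ∈ B, q i) :
    ∀ A : Finset (ι × κ), ∃ B : Finset (ι × κ),
      B.card = A.card ∧ ∑ z ∈ A, p z.1 * r z.2 ≤ ∑ z ∈ B, q z.1 * r z.2 := by
  classical
  intro A
  -- fibers of A over the second coordinate, projected to ι
  set f : κ → Finset ι := fun j => (A.filter (fun z => z.2 = j)).image Prod.fst with hf
  have hfcard : ∀ j, (f j).card = (A.filter (fun z => z.2 = j)).card := by
    intro j
    apply Finset.card_image_of_injOn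
    intro z hz w hw h
    simp only [Finset.mem_coe, Finset.mem_filter] at hz hw
    exact Prod.ext h (hz.2.trans hw.2.symm)
  choose g hgcard hgle using fun j => hmaj (f j)
  -- injectivity of i ↦ (i, j)
  have hinj : ∀ j : κ, Function.Injective (fun i : ι => (i, j)) :=
    fun j a b h => (Prod.ext_iff.mp h).1
  -- disjointness of the pieces
  have hdisj : ((Finset.univ : Finset κ) : Set κ).PairwiseDisjoint
      (fun j => (g j).image (fun i => (i, j))) := by
    intro a _ b _ hab
    simp only [Finset.disjoint_left, Finset.mem_image]
    rintro z ⟨i, _, rfl⟩ ⟨i', _, h⟩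
    exact hab ((Prod.ext_iff.mp h).2.symm)
  refine ⟨Finset.univ.biUnion (fun j => (g j).image (fun i => (i, j))), ?_, ?_⟩
  · rw [Finset.card_biUnion (fun a ha b hb hab => hdisj ha hb hab)]
    rw [Finset.card_eq_sum_card_fiberwise (f := fun z : ι × κ => z.2)
      (t := (Finset.univ : Finset κ)) (fun _ _ => Finset.mem_univ _)]
    refine Finset.sum_congr rfl fun j _ => ?_
    rw [Finset.card_image_of_injective _ (hinj j), hgcard j, hfcard j]
  · rw [Finset.sum_biUnion hdisj]
    rw [← Finset.sum_fiberwise A (fun z : ι × κ => z.2) (fun z => p z.1 * r z.2)]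
    refine Finset.sum_le_sum fun j _ => ?_
    have hA : ∑ z ∈ A.filter (fun z => z.2 = j), p z.1 * r z.2
        = (∑ i ∈ f j, p i) * r j := by
      rw [hf, Finset.sum_image (fun z hz w hw h => by
        simp only [Finset.mem_coe, Finset.mem_filter] at hz hw
        exact Prod.ext h (hz.2.trans hw.2.symm)), Finset.sum_mul]
      refine Finset.sum_congr rfl fun z hz => ?_
      simp only [Finset.mem_filter] at hz
      rw [hz.2]
    have hB : ∑ z ∈ (g j).image (fun i => (i, j)), q z.1 * r z.2
        = (∑ i ∈ g j, q i) * r j := by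
      rw [Finset.sum_image (fun a _ b _ h => hinj j h), Finset.sum_mul]
    rw [hA, hB]
    exact mul_le_mul_of_nonneg_right (hgle j) (hr0 j)
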